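/- If h and k are relatively prime positive integers and x, y are real numbers, then the Dedekind–Rademacher sum satisfies the reciprocity law: s(h,k;x,y) + s(k,h;y,x) = -¼·1_ℤ(x)·1_ℤ(y) + B̄₁(x)·B̄₁(y) + ½·( (h/k)·B̄₂(y) + (1/(hk))·B̄₂(kx+hy) + (k/h)·B̄₂(x) ). -/

import Mathlib

open scoped BigOperators
attribute [local instance] Classical.propDecidable

/-- Periodized first Bernoulli polynomial: `x - ⌊x⌋ - 1/2` off the integers, `0` on ℤ. -/
noncomputable def B1bar (x : ℝ) : ℝ := if ∃ n : ℤ, x = n then 0 else Int.fract x - 1/2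

/-- Periodized second Bernoulli polynomial. -/
noncomputable def B2bar (x : ℝ) : ℝ := (Int.fract x)^2 - Int.fract x + 1/6

/-- Indicator function of the integers. -/
noncomputable def indZ (x : ℝ) : ℝ := if ∃ n : ℤ, x = n then 1 else 0

/-- The Dedekind–Rademacher sum `s(h,k;x,y)`. -/
noncomputable def sDR (h : ℤ) (k : ℕ) (x y : ℝ) : ℝ :=
  ∑ r ∈ Finset.range k, B1bar ((h : ℝ) * (((r : ℝ) + y) / k) + x) * B1bar (((r : ℝ) + y) / k)

lemma exists_int_add_int (x : ℝ) (n : ℤ) : (∃ m : ℤ, x + n = m) ↔ (∃ m : ℤ, x = m) := by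
  constructor
  · rintro ⟨m, hm⟩; exact ⟨m - n, by push_cast; linarith⟩
  · rintro ⟨m, hm⟩; exact ⟨m + n, by push_cast; linarith⟩

lemma B1bar_add_int (x : ℝ) (n : ℤ) : B1bar (x + n) = B1bar x := by
  unfold B1bar; rw [exists_int_add_int, Int.fract_add_intCast]

lemma B2bar_add_int (x : ℝ) (n : ℤ) : B2bar (x + n) = B2bar x := by
  unfold B2bar; rw [Int.fract_add_intCast]

lemma indZ_add_int (x : ℝ) (n : ℤ) : indZ (x + n) = indZ x := by
  unfold indZ; rw [exists_int_add_int]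

lemma fract_eq_zero_iff' (x : ℝ) : Int.fract x = 0 ↔ ∃ n : ℤ, x = n := by
  constructor
  · intro hz; exact ⟨⌊x⌋, by have := Int.fract_add_floor x; rw [hz] at this; linarith⟩
  · rintro ⟨n, rfl⟩; exact Int.fract_intCast n

lemma not_exists_int_of_mem_Ioo {x : ℝ} (h0 : 0 < x) (h1 : x < 1) : ¬ ∃ n : ℤ, x = n := by
  rintro ⟨n, rfl⟩
  have a : (0:ℤ) < n := by exact_mod_cast h0
  have b : n < 1 := by exact_mod_cast h1
  omega

lemma sum_range_real (m : ℕ) : ∑ r ∈ Finset.range m, (r : ℝ) = m * (m - 1) / 2 := by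
  induction m with
  | zero => simp
  | succ n ih => rw [Finset.sum_range_succ, ih]; push_cast; ring

lemma sum_range_sq_real (m : ℕ) :
    ∑ r ∈ Finset.range m, (r : ℝ)^2 = m * (m - 1) * (2*m - 1) / 6 := by
  induction m with
  | zero => simp
  | succ n ih => rw [Finset.sum_range_succ, ih]; push_cast; ring

lemma sum_div_shift_one (f : ℝ → ℝ) (hf : ∀ x (n : ℤ), f (x + n) = f x) {m : ℕ}
    (hm : 0 < m) (z : ℝ) :
    ∑ r ∈ Finset.range m, f ((z + 1 + r)/m) = ∑ r ∈ Finset.range m, f ((z + r)/m) := by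
  have hm' : (m:ℝ) ≠ 0 := Nat.cast_ne_zero.2 hm.ne'
  have h1 : ∀ r : ℕ, f ((z + 1 + r)/m) = f ((z + ((r+1:ℕ):ℝ))/m) := by
    intro r; congr 1; push_cast; ring
  simp_rw [h1]
  have h2 : ∑ r ∈ Finset.range (m+1), f ((z + r)/m)
      = (∑ r ∈ Finset.range m, f ((z + ((r+1:ℕ):ℝ))/m)) + f ((z + ((0:ℕ):ℝ))/m) :=
    Finset.sum_range_succ' (fun r : ℕ => f ((z + r)/m)) m
  have h3 : ∑ r ∈ Finset.range (m+1), f ((z + r)/m)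
      = (∑ r ∈ Finset.range m, f ((z + r)/m)) + f ((z + m)/m) :=
    Finset.sum_range_succ (fun r : ℕ => f ((z + r)/m)) m
  have h4 : f ((z + (m:ℝ))/m) = f ((z + ((0:ℕ):ℝ))/m) := by
    have e : (z + (m:ℝ))/m = z/m + ((1:ℤ):ℝ) := by push_cast; field_simp
    rw [e, hf]; norm_num
  rw [h2, h4] at h3
  linarith

lemma sum_div_shift_int (f : ℝ → ℝ) (hf : ∀ x (n : ℤ), f (x + n) = f x) {m : ℕ}
    (hm : 0 < m) (z : ℝ) (n : ℤ) :
    ∑ r ∈ Finset.range m, f ((z + n + r)/m) = ∑ r ∈ Finset.range m, f ((z + r)/m) := by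
  induction n using Int.induction_on with
  | zero => simp
  | succ i ih =>
      have e : ∀ r : ℕ, (z + ((i:ℤ)+1 : ℤ) + r : ℝ) = (z + (i:ℤ)) + 1 + r := by
        intro r; push_cast; ring
      simp_rw [e]
      rw [sum_div_shift_one f hf hm (z + (i:ℤ))]
      exact ih
  | pred i ih =>
      have e : ∀ r : ℕ, (z + (-(i:ℤ)-1 : ℤ) + 1 + r : ℝ) = z + (-(i:ℤ) : ℤ) + r := by
        intro r; push_cast; ring
      have := sum_div_shift_one f hf hm (z + (-(i:ℤ)-1 : ℤ))
      simp_rw [e] at this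
      rw [← this]
      exact ih

lemma sum_div_fract (f : ℝ → ℝ) (hf : ∀ x (n : ℤ), f (x + n) = f x) {m : ℕ}
    (hm : 0 < m) (z : ℝ) :
    ∑ r ∈ Finset.range m, f ((z + r)/m)
      = ∑ r ∈ Finset.range m, f ((Int.fract z + r)/m) := by
  have : z = Int.fract z + (⌊z⌋ : ℤ) := (Int.fract_add_floor z).symm
  conv_lhs => rw [this]
  exact sum_div_shift_int f hf hm (Int.fract z) ⌊z⌋

lemma B2bar_dist {m : ℕ} (hm : 0 < m) (z : ℝ) :
    ∑ r ∈ Finset.range m, B2bar ((z + r)/m) = (1/m) * B2bar z := by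
  have hm' : (m:ℝ) ≠ 0 := Nat.cast_ne_zero.2 hm.ne'
  have hmpos : (0:ℝ) < m := by positivity
  rw [sum_div_fract B2bar B2bar_add_int hm]
  set a := Int.fract z with ha
  have ha0 : 0 ≤ a := Int.fract_nonneg z
  have ha1 : a < 1 := Int.fract_lt_one z
  have hterm : ∀ r ∈ Finset.range m, B2bar ((a + r)/m)
      = (a^2/m^2 - a/m + 1/6) + (2*a/m^2 - 1/m)*(r:ℝ) + (1/m^2)*(r:ℝ)^2 := by
    intro r hr
    have hrm : (r:ℝ) ≤ (m:ℝ) - 1 := by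
      have : r + 1 ≤ m := Finset.mem_range.1 hr
      have := Nat.cast_le (α := ℝ).2 this
      push_cast at this; linarith
    have h0 : 0 ≤ (a + r)/m := by positivity
    have h1 : (a + r)/m < 1 := by
      rw [div_lt_one hmpos]; linarith
    unfold B2bar
    rw [Int.fract_eq_self.2 ⟨h0, h1⟩]
    field_simp
    ring
  rw [Finset.sum_congr rfl hterm]
  have hB : B2bar z = a^2 - a + 1/6 := by
    unfold B2bar; rw [← ha]
  rw [hB, Finset.sum_add_distrib, Finset.sum_add_distrib, Finset.sum_const,
    ← Finset.mul_sum, ← Finset.mul_sum, sum_range_real, sum_range_sq_real]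
  simp only [nsmul_eq_mul, Finset.card_range]
  field_simp
  ring

lemma B1bar_dist {m : ℕ} (hm : 0 < m) (z : ℝ) :
    ∑ r ∈ Finset.range m, B1bar ((z + r)/m) = B1bar z := by
  have hm' : (m:ℝ) ≠ 0 := Nat.cast_ne_zero.2 hm.ne'
  have hmpos : (0:ℝ) < m := by positivity
  rw [sum_div_fract B1bar B1bar_add_int hm]
  have hBz : B1bar z = B1bar (Int.fract z) := by
    conv_lhs => rw [show z = Int.fract z + (⌊z⌋:ℤ) from (Int.fract_add_floor z).symm]
    rw [B1bar_add_int]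
  rw [hBz]
  set a := Int.fract z with ha
  have ha0 : 0 ≤ a := Int.fract_nonneg z
  have ha1 : a < 1 := Int.fract_lt_one z
  rcases eq_or_lt_of_le ha0 with h0 | h0
  · -- a = 0
    obtain ⟨m', rfl⟩ : ∃ m', m = m' + 1 := ⟨m - 1, by omega⟩
    rw [← h0]
    have hB0 : B1bar 0 = 0 := by
      unfold B1bar; rw [if_pos ⟨0, by norm_num⟩]
    rw [Finset.sum_range_succ']
    have hfirst : B1bar (((0:ℝ) + ((0:ℕ):ℝ))/(m'+1:ℕ)) = 0 := by
      norm_num [hB0]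
    rw [hfirst, add_zero]
    have hterm : ∀ r ∈ Finset.range m', B1bar (((0:ℝ) + ((r+1:ℕ):ℝ))/(m'+1:ℕ))
        = ((r:ℝ)+1)/(m'+1:ℕ) - 1/2 := by
      intro r hr
      have hrm : (r:ℝ) ≤ (m':ℝ) - 1 := by
        have : r + 1 ≤ m' := Finset.mem_range.1 hr
        have := Nat.cast_le (α := ℝ).2 this
        push_cast at this; linarith
      have hmp : (0:ℝ) < ((m'+1:ℕ):ℝ) := by positivity
      have h0' : 0 < ((0:ℝ) + ((r+1:ℕ):ℝ))/(m'+1:ℕ) := by positivity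
      have h1' : ((0:ℝ) + ((r+1:ℕ):ℝ))/(m'+1:ℕ) < 1 := by
        rw [div_lt_one hmp]; push_cast; linarith
      unfold B1bar
      rw [if_neg (not_exists_int_of_mem_Ioo h0' h1'),
        Int.fract_eq_self.2 ⟨le_of_lt h0', h1'⟩]
      push_cast; ring
    rw [Finset.sum_congr rfl hterm, Finset.sum_sub_distrib, ← Finset.sum_div,
      Finset.sum_add_distrib, sum_range_real, Finset.sum_const, Finset.card_range]
    simp only [Finset.sum_const, Finset.card_range, nsmul_eq_mul]
    have hmp' : ((m'+1:ℕ):ℝ) ≠ 0 := by positivity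
    rw [hB0]
    field_simp
    push_cast
    ring
  · -- 0 < a
    have hterm : ∀ r ∈ Finset.range m, B1bar ((a + r)/m) = (a + r)/m - 1/2 := by
      intro r hr
      have hrm : (r:ℝ) ≤ (m:ℝ) - 1 := by
        have : r + 1 ≤ m := Finset.mem_range.1 hr
        have := Nat.cast_le (α := ℝ).2 this
        push_cast at this; linarith
      have h0' : 0 < (a + r)/m := by positivity
      have h1' : (a + r)/m < 1 := by rw [div_lt_one hmpos]; linarith
      unfold B1bar
      rw [if_neg (not_exists_int_of_mem_Ioo h0' h1'),
        Int.fract_eq_self.2 ⟨le_of_lt h0', h1'⟩]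
    rw [Finset.sum_congr rfl hterm]
    have hBa : B1bar a = a - 1/2 := by
      unfold B1bar
      rw [if_neg (not_exists_int_of_mem_Ioo h0 ha1), Int.fract_fract]
    rw [hBa]
    rw [Finset.sum_sub_distrib, Finset.sum_const, Finset.card_range]
    simp only [nsmul_eq_mul]
    rw [← Finset.sum_div, Finset.sum_add_distrib, sum_range_real, Finset.sum_const,
      Finset.card_range]
    simp only [nsmul_eq_mul]
    field_simp
    ring

lemma indZ_dist {m : ℕ} (hm : 0 < m) (z : ℝ) :
    ∑ r ∈ Finset.range m, indZ ((z + r)/m) = indZ z := by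
  have hm' : (m:ℝ) ≠ 0 := Nat.cast_ne_zero.2 hm.ne'
  have hmpos : (0:ℝ) < m := by positivity
  rw [sum_div_fract indZ indZ_add_int hm]
  have hBz : indZ z = indZ (Int.fract z) := by
    conv_lhs => rw [show z = Int.fract z + (⌊z⌋:ℤ) from (Int.fract_add_floor z).symm]
    rw [indZ_add_int]
  rw [hBz]
  set a := Int.fract z with ha
  have ha0 : 0 ≤ a := Int.fract_nonneg z
  have ha1 : a < 1 := Int.fract_lt_one z
  rcases eq_or_lt_of_le ha0 with h0 | h0
  · obtain ⟨m', rfl⟩ : ∃ m', m = m' + 1 := ⟨m - 1, by omega⟩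
    rw [← h0]
    have hI0 : indZ 0 = 1 := by
      unfold indZ; rw [if_pos ⟨0, by norm_num⟩]
    rw [Finset.sum_range_succ']
    have hfirst : indZ (((0:ℝ) + ((0:ℕ):ℝ))/(m'+1:ℕ)) = 1 := by
      norm_num [hI0]
    rw [hfirst]
    have hterm : ∀ r ∈ Finset.range m', indZ (((0:ℝ) + ((r+1:ℕ):ℝ))/(m'+1:ℕ)) = 0 := by
      intro r hr
      have hrm : (r:ℝ) ≤ (m':ℝ) - 1 := by
        have : r + 1 ≤ m' := Finset.mem_range.1 hr
        have := Nat.cast_le (α := ℝ).2 this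
        push_cast at this; linarith
      have hmp : (0:ℝ) < ((m'+1:ℕ):ℝ) := by positivity
      have h0' : 0 < ((0:ℝ) + ((r+1:ℕ):ℝ))/(m'+1:ℕ) := by positivity
      have h1' : ((0:ℝ) + ((r+1:ℕ):ℝ))/(m'+1:ℕ) < 1 := by
        rw [div_lt_one hmp]; push_cast; linarith
      unfold indZ
      rw [if_neg (not_exists_int_of_mem_Ioo h0' h1')]
    rw [Finset.sum_congr rfl hterm]
    simp [hI0]
  · have hterm : ∀ r ∈ Finset.range m, indZ ((a + r)/m) = 0 := by
      intro r hr
      have hrm : (r:ℝ) ≤ (m:ℝ) - 1 := by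
        have : r + 1 ≤ m := Finset.mem_range.1 hr
        have := Nat.cast_le (α := ℝ).2 this
        push_cast at this; linarith
      have h0' : 0 < (a + r)/m := by positivity
      have h1' : (a + r)/m < 1 := by rw [div_lt_one hmpos]; linarith
      unfold indZ
      rw [if_neg (not_exists_int_of_mem_Ioo h0' h1')]
    rw [Finset.sum_congr rfl hterm]
    have hIa : indZ a = 0 := by
      unfold indZ
      rw [if_neg (not_exists_int_of_mem_Ioo h0 ha1)]
    simp [hIa]

lemma key_identity (u v : ℝ) :
    B1bar (u+v) * (B1bar u + B1bar v) =
      B1bar u * B1bar v + (B2bar u + B2bar v + B2bar (u+v))/2 - (1/4) * indZ u * indZ v := by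
  have hB1 : ∀ w : ℝ, (¬ ∃ n : ℤ, w = n) → B1bar w = Int.fract w - 1/2 := by
    intro w hw; unfold B1bar; rw [if_neg hw]
  have hB1' : ∀ w : ℝ, (∃ n : ℤ, w = n) → B1bar w = 0 := by
    intro w hw; unfold B1bar; rw [if_pos hw]
  have hB2 : ∀ w : ℝ, B2bar w = (Int.fract w)^2 - Int.fract w + 1/6 := fun w => rfl
  have hI : ∀ w : ℝ, (¬ ∃ n : ℤ, w = n) → indZ w = 0 := by
    intro w hw; unfold indZ; rw [if_neg hw]
  have hI' : ∀ w : ℝ, (∃ n : ℤ, w = n) → indZ w = 1 := by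
    intro w hw; unfold indZ; rw [if_pos hw]
  by_cases hu : ∃ n : ℤ, u = n
  · obtain ⟨n, rfl⟩ := hu
    have h1 : B1bar ((n:ℝ) + v) = B1bar v := by rw [add_comm]; exact B1bar_add_int v n
    have h2 : B2bar ((n:ℝ) + v) = B2bar v := by rw [add_comm]; exact B2bar_add_int v n
    have h3 : B1bar (n:ℝ) = 0 := hB1' _ ⟨n, rfl⟩
    have h4 : indZ (n:ℝ) = 1 := hI' _ ⟨n, rfl⟩
    have h5 : B2bar (n:ℝ) = 1/6 := by rw [hB2, Int.fract_intCast]; norm_num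
    rw [h1, h2, h3, h4, h5]
    by_cases hv : ∃ m : ℤ, v = m
    · rw [hB1' v hv, hI' v hv]
      obtain ⟨m, rfl⟩ := hv
      rw [hB2, Int.fract_intCast]
      ring
    · rw [hB1 v hv, hI v hv, hB2]
      ring
  · by_cases hv : ∃ m : ℤ, v = m
    · obtain ⟨m, rfl⟩ := hv
      have h1 : B1bar (u + (m:ℝ)) = B1bar u := B1bar_add_int u m
      have h2 : B2bar (u + (m:ℝ)) = B2bar u := B2bar_add_int u m
      have h3 : B1bar (m:ℝ) = 0 := hB1' _ ⟨m, rfl⟩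
      have h4 : indZ (m:ℝ) = 1 := hI' _ ⟨m, rfl⟩
      have h5 : B2bar (m:ℝ) = 1/6 := by rw [hB2, Int.fract_intCast]; norm_num
      rw [h1, h2, h3, h4, h5, hB1 u hu, hI u hu, hB2]
      ring
    · set a := Int.fract u with ha
      set b := Int.fract v with hb
      have ha0 : 0 < a := lt_of_le_of_ne (Int.fract_nonneg u)
        (fun hz => hu ((fract_eq_zero_iff' u).1 hz.symm))
      have hb0 : 0 < b := lt_of_le_of_ne (Int.fract_nonneg v)
        (fun hz => hv ((fract_eq_zero_iff' v).1 hz.symm))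
      have ha1 : a < 1 := Int.fract_lt_one u
      have hb1 : b < 1 := Int.fract_lt_one v
      have huv : Int.fract (u + v) = Int.fract (a + b) := by
        have : u + v = (a + b) + ((⌊u⌋ + ⌊v⌋ : ℤ) : ℝ) := by
          push_cast
          have e1 := Int.fract_add_floor u
          have e2 := Int.fract_add_floor v
          rw [← ha] at e1; rw [← hb] at e2
          linarith
        rw [this, Int.fract_add_intCast]
      rcases lt_trichotomy (a + b) 1 with hab | hab | hab
      · have hfr : Int.fract (u + v) = a + b := by
          rw [huv, Int.fract_eq_self.2 ⟨by linarith, hab⟩]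
        have hnz : ¬ ∃ n : ℤ, u + v = n := by
          intro hc
          have := (fract_eq_zero_iff' (u+v)).2 hc
          rw [hfr] at this; linarith
        rw [hB1 _ hnz, hB1 u hu, hB1 v hv, hI u hu, hB2, hB2, hB2, hfr, ← ha, ← hb]
        ring
      · have hfr : Int.fract (u + v) = 0 := by
          rw [huv, hab]
          norm_num [Int.fract_one]
        have hz : ∃ n : ℤ, u + v = n := (fract_eq_zero_iff' (u+v)).1 hfr
        rw [hB1' _ hz, hB1 u hu, hB1 v hv, hI u hu, hB2, hB2, hB2, hfr, ← ha, ← hb]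
        have hba : b = 1 - a := by linarith
        rw [hba]
        ring
      · have hfr : Int.fract (u + v) = a + b - 1 := by
          rw [huv, show a + b = (a + b - 1) + ((1:ℤ):ℝ) by norm_num,
            Int.fract_add_intCast, Int.fract_eq_self.2 ⟨by linarith, by linarith⟩]
          norm_num
        have hnz : ¬ ∃ n : ℤ, u + v = n := by
          intro hc
          have := (fract_eq_zero_iff' (u+v)).2 hc
          rw [hfr] at this; linarith
        rw [hB1 _ hnz, hB1 u hu, hB1 v hv, hI u hu, hB2, hB2, hB2, hfr, ← ha, ← hb]
        ring

lemma crt_sum (h k : ℕ) (hh : 0 < h) (hk : 0 < k) (hco : Nat.Coprime h k) (G : ℕ → ℝ) :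
    ∑ μ ∈ Finset.range k, ∑ ν ∈ Finset.range h, G ((h*μ + k*ν) % (h*k))
      = ∑ t ∈ Finset.range (h*k), G t := by
  have hhk : 0 < h * k := Nat.mul_pos hh hk
  set s : Finset (ℕ × ℕ) := Finset.range k ×ˢ Finset.range h with hs
  set e : ℕ × ℕ → ℕ := fun p => (h*p.1 + k*p.2) % (h*k) with he
  have hinj : ∀ p₁ ∈ s, ∀ p₂ ∈ s, e p₁ = e p₂ → p₁ = p₂ := by
    rintro ⟨μ₁, ν₁⟩ hp₁ ⟨μ₂, ν₂⟩ hp₂ hep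
    simp only [hs, Finset.mem_product, Finset.mem_range] at hp₁ hp₂
    simp only [he] at hep
    have hmodk : (h*μ₁ + k*ν₁) % k = (h*μ₂ + k*ν₂) % k := by
      have := congrArg (· % k) hep
      simpa [Nat.mod_mod_of_dvd _ (Dvd.intro h rfl)] using this
    have hmodh : (h*μ₁ + k*ν₁) % h = (h*μ₂ + k*ν₂) % h := by
      have := congrArg (· % h) hep
      simpa [Nat.mod_mod_of_dvd _ (Dvd.intro_left k rfl)] using this
    have hμ : (h*μ₁) % k = (h*μ₂) % k := by
      simpa [Nat.add_mul_mod_self_left] using hmodk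
    have hν : (k*ν₁) % h = (k*ν₂) % h := by
      rw [add_comm (h*μ₁), add_comm (h*μ₂)] at hmodh
      simpa [Nat.add_mul_mod_self_left] using hmodh
    have hμ' : μ₁ % k = μ₂ % k := Nat.ModEq.cancel_left_of_coprime hco.symm hμ
    have hν' : ν₁ % h = ν₂ % h :=
      Nat.ModEq.cancel_left_of_coprime hco hν
    rw [Nat.mod_eq_of_lt hp₁.1, Nat.mod_eq_of_lt hp₂.1] at hμ'
    rw [Nat.mod_eq_of_lt hp₁.2, Nat.mod_eq_of_lt hp₂.2] at hν'
    simp [hμ', hν']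
  have hsub : s.image e ⊆ Finset.range (h*k) := by
    intro t ht
    simp only [Finset.mem_image] at ht
    obtain ⟨p, _, rfl⟩ := ht
    exact Finset.mem_range.2 (Nat.mod_lt _ hhk)
  have hcard : (Finset.range (h*k)).card ≤ (s.image e).card := by
    rw [Finset.card_image_of_injOn hinj]
    simp [hs, mul_comm]
  have himg : s.image e = Finset.range (h*k) :=
    Finset.eq_of_subset_of_card_le hsub hcard
  rw [← himg, Finset.sum_image hinj, hs, Finset.sum_product]

/-- Rademacher's reciprocity law for Dedekind–Rademacher sums. -/
theorem dedekind_rademacher_reciprocity (h k : ℕ) (hh : 0 < h) (hk : 0 < k)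
    (hco : Nat.Coprime h k) (x y : ℝ) :
    sDR h k x y + sDR k h y x =
      -(1/4) * indZ x * indZ y + B1bar x * B1bar y +
        (1/2) * ((h / k : ℝ) * B2bar y + (1 / ((h : ℝ) * k)) * B2bar (k * x + h * y)
          + (k / h : ℝ) * B2bar x) := by
  have hh' : ((h:ℕ):ℝ) ≠ 0 := Nat.cast_ne_zero.2 hh.ne'
  have hk' : ((k:ℕ):ℝ) ≠ 0 := Nat.cast_ne_zero.2 hk.ne'
  have hhk : 0 < h * k := Nat.mul_pos hh hk
  set U : ℕ → ℝ := fun μ => ((μ:ℝ) + y)/k with hU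
  set V : ℕ → ℝ := fun ν => ((ν:ℝ) + x)/h with hV
  have e1 : sDR h k x y = ∑ μ ∈ Finset.range k, ∑ ν ∈ Finset.range h,
      B1bar (U μ + V ν) * B1bar (U μ) := by
    unfold sDR
    refine Finset.sum_congr rfl fun μ _ => ?_
    have hsplit : B1bar (((h:ℤ):ℝ) * (((μ:ℝ) + y) / k) + x)
        = ∑ ν ∈ Finset.range h, B1bar (U μ + V ν) := by
      rw [← B1bar_dist hh (((h:ℤ):ℝ) * (((μ:ℝ) + y) / k) + x)]
      refine Finset.sum_congr rfl fun ν _ => ?_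
      congr 1
      simp only [hU, hV]
      push_cast
      field_simp
      ring
    rw [hsplit, Finset.sum_mul]
  have e2 : sDR k h y x = ∑ μ ∈ Finset.range k, ∑ ν ∈ Finset.range h,
      B1bar (U μ + V ν) * B1bar (V ν) := by
    unfold sDR
    rw [show (∑ r ∈ Finset.range h, B1bar (((k:ℤ):ℝ) * (((r:ℝ) + x) / h) + y)
          * B1bar (((r:ℝ) + x) / h))
        = ∑ ν ∈ Finset.range h, ∑ μ ∈ Finset.range k,
            B1bar (U μ + V ν) * B1bar (V ν) from ?_, Finset.sum_comm]
    refine Finset.sum_congr rfl fun ν _ => ?_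
    have hsplit : B1bar (((k:ℤ):ℝ) * (((ν:ℝ) + x) / h) + y)
        = ∑ μ ∈ Finset.range k, B1bar (U μ + V ν) := by
      rw [← B1bar_dist hk (((k:ℤ):ℝ) * (((ν:ℝ) + x) / h) + y)]
      refine Finset.sum_congr rfl fun μ _ => ?_
      congr 1
      simp only [hU, hV]
      push_cast
      field_simp
      ring
    rw [hsplit, Finset.sum_mul]
  rw [e1, e2, ← Finset.sum_add_distrib]
  have ecomb : ∀ μ ∈ Finset.range k,
      ((∑ ν ∈ Finset.range h, B1bar (U μ + V ν) * B1bar (U μ))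
        + ∑ ν ∈ Finset.range h, B1bar (U μ + V ν) * B1bar (V ν))
      = ∑ ν ∈ Finset.range h, (B1bar (U μ) * B1bar (V ν)
          + B2bar (U μ)/2 + B2bar (V ν)/2 + B2bar (U μ + V ν)/2
          - (1/4) * (indZ (U μ) * indZ (V ν))) := by
    intro μ _
    rw [← Finset.sum_add_distrib]
    refine Finset.sum_congr rfl fun ν _ => ?_
    have hki := key_identity (U μ) (V ν)
    linear_combination hki
  rw [Finset.sum_congr rfl ecomb]
  simp only [Finset.sum_add_distrib, Finset.sum_sub_distrib]
  have hy' : ∑ μ ∈ Finset.range k, B1bar (U μ) = B1bar y := by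
    rw [← B1bar_dist hk y]
    exact Finset.sum_congr rfl fun μ _ => by congr 1; simp only [hU]; ring
  have hx' : ∑ ν ∈ Finset.range h, B1bar (V ν) = B1bar x := by
    rw [← B1bar_dist hh x]
    exact Finset.sum_congr rfl fun ν _ => by congr 1; simp only [hV]; ring
  have hyI : ∑ μ ∈ Finset.range k, indZ (U μ) = indZ y := by
    rw [← indZ_dist hk y]
    exact Finset.sum_congr rfl fun μ _ => by congr 1; simp only [hU]; ring
  have hxI : ∑ ν ∈ Finset.range h, indZ (V ν) = indZ x := by
    rw [← indZ_dist hh x]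
    exact Finset.sum_congr rfl fun ν _ => by congr 1; simp only [hV]; ring
  have hUdist : ∑ μ ∈ Finset.range k, B2bar (U μ) = (1/(k:ℝ)) * B2bar y := by
    rw [← B2bar_dist hk y]
    exact Finset.sum_congr rfl fun μ _ => by congr 1; simp only [hU]; ring
  have hVdist : ∑ ν ∈ Finset.range h, B2bar (V ν) = (1/(h:ℝ)) * B2bar x := by
    rw [← B2bar_dist hh x]
    exact Finset.sum_congr rfl fun ν _ => by congr 1; simp only [hV]; ring
  have hA : ∑ μ ∈ Finset.range k, ∑ ν ∈ Finset.range h, B1bar (U μ) * B1bar (V ν)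
      = B1bar y * B1bar x := by
    simp_rw [← Finset.mul_sum, hx', ← Finset.sum_mul, hy']
  have hB : ∑ μ ∈ Finset.range k, ∑ ν ∈ Finset.range h, B2bar (U μ)/2
      = (h:ℝ) * ((1/(k:ℝ)) * B2bar y) / 2 := by
    simp only [Finset.sum_const, Finset.card_range, nsmul_eq_mul]
    rw [← Finset.mul_sum, ← Finset.sum_div, hUdist]
    ring
  have hC : ∑ μ ∈ Finset.range k, ∑ ν ∈ Finset.range h, B2bar (V ν)/2
      = (k:ℝ) * ((1/(h:ℝ)) * B2bar x) / 2 := by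
    have inner : ∑ ν ∈ Finset.range h, B2bar (V ν)/2 = ((1/(h:ℝ)) * B2bar x)/2 := by
      rw [← Finset.sum_div, hVdist]
    rw [Finset.sum_congr rfl (fun μ _ => inner), Finset.sum_const, Finset.card_range,
      nsmul_eq_mul]
    ring
  set c : ℝ := (k:ℝ)*x + (h:ℝ)*y with hc
  have hD : ∑ μ ∈ Finset.range k, ∑ ν ∈ Finset.range h, B2bar (U μ + V ν)/2
      = (1/((h:ℝ)*(k:ℝ))) * B2bar c / 2 := by
    have hhk' : ((h*k:ℕ):ℝ) ≠ 0 := Nat.cast_ne_zero.2 hhk.ne'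
    have hmodG : ∀ t : ℕ, B2bar (((t:ℝ) + c)/((h*k:ℕ):ℝ))
        = B2bar ((((t % (h*k) : ℕ):ℝ) + c)/((h*k:ℕ):ℝ)) := by
      intro t
      have hdm : ((h*k : ℕ):ℝ) * ((t/(h*k) : ℕ):ℝ) + ((t % (h*k) : ℕ):ℝ) = (t:ℝ) := by
        exact_mod_cast congrArg (fun n : ℕ => (n:ℝ)) (Nat.div_add_mod t (h*k))
      have hq : ((((t/(h*k) : ℕ) : ℤ)):ℝ) = ((t/(h*k) : ℕ):ℝ) := by norm_cast
      have e : ((t:ℝ) + c)/((h*k:ℕ):ℝ)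
          = ((((t % (h*k) : ℕ):ℝ) + c)/((h*k:ℕ):ℝ)) + (((t/(h*k) : ℕ) : ℤ):ℝ) := by
        rw [hq, div_add' _ _ _ hhk']
        congr 1
        linarith [hdm]
      rw [e, B2bar_add_int]
    have hterm : ∀ μ ∈ Finset.range k, ∀ ν ∈ Finset.range h,
        B2bar (U μ + V ν) = B2bar ((((((h*μ + k*ν) % (h*k)) : ℕ) : ℝ) + c) / (((h*k : ℕ)) : ℝ)) := by
      intro μ _ ν _
      rw [← hmodG (h*μ + k*ν)]
      congr 1
      simp only [hU, hV, hc]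
      push_cast
      field_simp
      ring
    have step : ∑ μ ∈ Finset.range k, ∑ ν ∈ Finset.range h, B2bar (U μ + V ν)
        = (1/((h:ℝ)*(k:ℝ))) * B2bar c := by
      rw [Finset.sum_congr rfl (fun μ hμ => Finset.sum_congr rfl (fun ν hν =>
        hterm μ hμ ν hν))]
      rw [crt_sum h k hh hk hco (fun t => B2bar (((t:ℝ) + c)/((h*k:ℕ):ℝ)))]
      have : ∀ t ∈ Finset.range (h*k), B2bar (((t:ℝ) + c)/((h*k:ℕ):ℝ))
          = B2bar ((c + (t:ℝ))/((h*k:ℕ):ℝ)) := by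
        intro t _; congr 1; ring
      rw [Finset.sum_congr rfl this, B2bar_dist hhk c]
      push_cast
      ring
    calc ∑ μ ∈ Finset.range k, ∑ ν ∈ Finset.range h, B2bar (U μ + V ν)/2
        = (∑ μ ∈ Finset.range k, ∑ ν ∈ Finset.range h, B2bar (U μ + V ν))/2 := by
          simp [Finset.sum_div]
      _ = (1/((h:ℝ)*(k:ℝ))) * B2bar c / 2 := by rw [step]
  have hE : ∑ μ ∈ Finset.range k, ∑ ν ∈ Finset.range h,
      (1/4) * (indZ (U μ) * indZ (V ν)) = (1/4) * (indZ y * indZ x) := by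
    have inner : ∀ μ ∈ Finset.range k, ∑ ν ∈ Finset.range h,
        (1/4) * (indZ (U μ) * indZ (V ν)) = (1/4) * (indZ (U μ) * indZ x) := by
      intro μ _
      rw [← Finset.mul_sum, ← Finset.mul_sum, hxI]
    rw [Finset.sum_congr rfl inner]
    simp_rw [show ∀ μ:ℕ, (1/4) * (indZ (U μ) * indZ x)
      = ((1/4)*indZ x)*indZ (U μ) from fun μ => by ring]
    rw [← Finset.mul_sum, hyI]
    ring
  rw [hA, hB, hC, hD, hE]
  field_simp
  ring
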